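/- Let X be a Dedekind complete Riesz space with weak order unit e, let T be a conditional expectation operator on X with Te = e, and assume X is T-universally complete. Let (x_n) be a sequence in X and x ∈ X. If for every real ε > 0 the partial sums ∑_{n=1}^{N} T P_{(|x_n − x| − εe)^+} e, N ≥ 1, are order bounded in X, then (x_n) uo-converges to x, i.e. for every u ∈ X with u ≥ 0 the sequence (|x_n − x| ∧ u) order converges to 0. -/

import Mathlib

set_option linter.unusedSectionVars false
set_option linter.unusedVariables false
set_option maxHeartbeats 1000000

/-- A net `x : A → X` order converges to `l` if there is a (nonempty, upward directed)
net `y : B → X` decreasing to `0` (i.e. antitone with infimum `0`) such that for every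
index `b` the net `x` eventually satisfies `|x a - l| ≤ y b`. -/
def OrderConvergesTo {X : Type u} [Lattice X] [AddCommGroup X]
    {A : Type v} [Preorder A] (x : A → X) (l : X) : Prop :=
  ∃ (B : Type u) (r : B → B → Prop) (y : B → X),
    Nonempty B ∧
    (∀ b, r b b) ∧
    (∀ b₁ b₂ b₃, r b₁ b₂ → r b₂ b₃ → r b₁ b₃) ∧
    (∀ b₁ b₂, ∃ b₃, r b₁ b₃ ∧ r b₂ b₃) ∧
    (∀ b₁ b₂, r b₁ b₂ → y b₂ ≤ y b₁) ∧
    IsGLB (Set.range y) 0 ∧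
    ∀ b, ∃ a₀ : A, ∀ a : A, a₀ ≤ a → |x a - l| ≤ y b

/-- The band projection associated to a positive element `w`, applied to a positive
element `z` : `P_w z = sup_{n ≥ 1} (z ⊓ n • w)`. -/
noncomputable def bandProjApply {X : Type u} [ConditionallyCompleteLattice X]
    [AddCommGroup X] (w z : X) : X :=
  ⨆ n : ℕ, z ⊓ ((n + 1) • w)

section AuxLemmas

variable {X : Type u} [ConditionallyCompleteLattice X] [AddCommGroup X]
    [CovariantClass X X (· + ·) (· ≤ ·)]

theorem myPosPart_eq (a c : X) : (a - c) ⊔ 0 = a - a ⊓ c := by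
  have h2 : a ⊓ c + (a ⊔ c) = a + c := inf_add_sup a c
  calc (a - c) ⊔ 0 = (a - c) ⊔ (c - c) := by rw [sub_self]
    _ = (a ⊔ c) - c := by rw [sup_sub]
    _ = a - a ⊓ c := by
        have : a ⊔ c = a + c - a ⊓ c := by rw [← h2]; abel
        rw [this]; abel

theorem myInf_add_le {v w u : X} (hv : 0 ≤ v) (hw : 0 ≤ w) (hu : 0 ≤ u) :
    (v + w) ⊓ u ≤ v ⊓ u + w ⊓ u := by
  have h : v ⊓ u + (w ⊓ u) = ((v + w) ⊓ (u + w)) ⊓ ((v + u) ⊓ (u + u)) := by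
    rw [add_inf, inf_add, inf_add]
  rw [h]
  refine le_inf (le_inf inf_le_left ?_) (le_inf ?_ ?_)
  · exact inf_le_right.trans (le_add_of_nonneg_right hw)
  · exact inf_le_right.trans (le_add_of_nonneg_left hv)
  · exact inf_le_right.trans (le_add_of_nonneg_right hu)

variable [Module ℝ X] [PosSMulMono ℝ X]

theorem mySmul_nonneg {c : ℝ} (hc : 0 ≤ c) {v : X} (hv : 0 ≤ v) : 0 ≤ c • v := by
  have := smul_le_smul_of_nonneg_left hv hc
  rwa [smul_zero] at this

theorem mySmul_inf_ge {c : ℝ} (hc : 0 < c) (a b : X) : (c • a) ⊓ (c • b) ≤ c • (a ⊓ b) := by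
  have h1 : c⁻¹ • ((c • a) ⊓ (c • b)) ≤ a ⊓ b := by
    refine le_inf ?_ ?_
    · have := smul_le_smul_of_nonneg_left (inf_le_left (a := c • a) (b := c • b))
        (inv_nonneg.mpr hc.le)
      rwa [smul_smul, inv_mul_cancel₀ hc.ne', one_smul] at this
    · have := smul_le_smul_of_nonneg_left (inf_le_right (a := c • a) (b := c • b))
        (inv_nonneg.mpr hc.le)
      rwa [smul_smul, inv_mul_cancel₀ hc.ne', one_smul] at this
  have h2 := smul_le_smul_of_nonneg_left h1 hc.le
  rwa [smul_smul, mul_inv_cancel₀ hc.ne', one_smul] at h2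

/-- Archimedean property from conditional completeness. -/
theorem myArch {d c : X} (hd : 0 ≤ d) (h : ∀ m : ℕ, ((m : ℝ) + 1) • d ≤ c) : d ≤ 0 := by
  set F : ℕ → X := fun m => ((m : ℝ) + 1) • d with hF
  have hbdd : BddAbove (Set.range F) := ⟨c, by rintro _ ⟨m, rfl⟩; exact h m⟩
  set s : X := ⨆ m, F m with hs
  have hub : ∀ m, F m + d ≤ s := by
    intro m
    have h1 : F m + d = F (m + 1) := by
      simp only [hF]
      have hc : ((m + 1 : ℕ) : ℝ) + 1 = ((m : ℝ) + 1) + 1 := by push_cast; ring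
      rw [hc, add_smul ((m : ℝ) + 1) 1 d, one_smul]
    rw [h1]
    exact le_ciSup hbdd (m + 1)
  have h2 : s ≤ s - d := ciSup_le fun m => le_sub_iff_add_le.mpr (hub m)
  have h3 : s + d ≤ s := le_sub_iff_add_le.mp h2
  exact (add_le_iff_nonpos_right s).mp h3

/-- If `e` is a weak order unit and `b ≤ u - u ⊓ (m • e)` for all `m`, then `b ≤ 0`. -/
theorem myWeakUnit {e u b : X} (he : 0 < e)
    (hwu : ∀ z : X, 0 ≤ z → z ⊓ e = 0 → z = 0) (hu : 0 ≤ u)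
    (h : ∀ m : ℕ, b ≤ u - u ⊓ ((m : ℝ) • e)) : b ≤ 0 := by
  set F : ℕ → X := fun m => u ⊓ ((m : ℝ) • e) with hF
  have hFu : ∀ m, F m ≤ u := fun m => inf_le_left
  have hbdd : BddAbove (Set.range F) := ⟨u, by rintro _ ⟨m, rfl⟩; exact hFu m⟩
  set s : X := ⨆ m, F m with hs
  have hFs : ∀ m, F m ≤ s := fun m => le_ciSup hbdd m
  have hsu : s ≤ u := ciSup_le hFu
  set d : X := (u - s) ⊓ e with hd
  have hd0 : 0 ≤ d := le_inf (sub_nonneg.mpr hsu) he.le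
  have hkey : ∀ m : ℕ, (m : ℝ) • d ≤ F m := by
    intro m
    induction m with
    | zero =>
      rw [Nat.cast_zero, zero_smul]
      exact le_inf hu (by rw [Nat.cast_zero, zero_smul])
    | succ m ih =>
      have hsm : ((m + 1 : ℕ) : ℝ) • d = (m : ℝ) • d + d := by
        have hc : ((m + 1 : ℕ) : ℝ) = (m : ℝ) + 1 := by push_cast; ring
        rw [hc, add_smul, one_smul]
      rw [hsm]
      have h1 : d ≤ (u - F m) ⊓ e := by
        refine le_inf (le_trans inf_le_left (sub_le_sub_left (hFs m) u)) inf_le_right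
      have h2 : (m : ℝ) • d + d ≤ F m + ((u - F m) ⊓ e) := add_le_add ih h1
      have h3 : F m + ((u - F m) ⊓ e) = (F m + (u - F m)) ⊓ (F m + e) := add_inf _ _ _
      have h4 : F m + (u - F m) = u := by abel
      have h5 : F m + e ≤ ((m + 1 : ℕ) : ℝ) • e := by
        have hfm : F m ≤ (m : ℝ) • e := inf_le_right
        calc F m + e ≤ (m : ℝ) • e + e := add_le_add_left hfm e
          _ = ((m + 1 : ℕ) : ℝ) • e := by
              have hc : ((m + 1 : ℕ) : ℝ) = (m : ℝ) + 1 := by push_cast; ring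
              rw [hc, add_smul, one_smul]
      calc (m : ℝ) • d + d ≤ (F m + (u - F m)) ⊓ (F m + e) := h2.trans (le_of_eq h3)
        _ = u ⊓ (F m + e) := by rw [h4]
        _ ≤ u ⊓ (((m + 1 : ℕ) : ℝ) • e) := inf_le_inf_left u h5
        _ = F (m + 1) := rfl
  have hd_le : d ≤ 0 := by
    refine myArch (c := u) hd0 fun m => ?_
    have h1 : ((m : ℝ) + 1) • d = ((m + 1 : ℕ) : ℝ) • d := by
      congr 1; push_cast; ring
    rw [h1]
    exact (hkey (m + 1)).trans (hFu (m + 1))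
  have hdz : d = 0 := le_antisymm hd_le hd0
  have hus : u - s = 0 := hwu (u - s) (sub_nonneg.mpr hsu) hdz
  have hsu' : s = u := (sub_eq_zero.mp hus).symm
  have hsb : s ≤ u - b := ciSup_le fun m => le_sub_comm.mp (h m)
  rw [hsu'] at hsb
  exact (add_le_iff_nonpos_right u).mp (le_sub_iff_add_le.mp hsb)

end AuxLemmas

theorem stmt3 {X : Type u} [ConditionallyCompleteLattice X] [AddCommGroup X]
    [CovariantClass X X (· + ·) (· ≤ ·)] [Module ℝ X] [PosSMulMono ℝ X]
    -- weak order unit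
    (e : X) (he : 0 < e) (hwu : ∀ z : X, 0 ≤ z → z ⊓ e = 0 → z = 0)
    -- conditional expectation operator with `T e = e`
    (T : X →ₗ[ℝ] X)
    (hTpos : ∀ z : X, 0 ≤ z → 0 ≤ T z)
    (hTstrict : ∀ z : X, 0 ≤ z → T z = 0 → z = 0)
    (hTcont : ∀ S : Set X, S.Nonempty → DirectedOn (· ≥ ·) S → IsGLB S 0 →
      IsGLB (T '' S) 0)
    (hTidem : ∀ z : X, T (T z) = T z)
    (hTe : T e = e)
    -- `X` is `T`-universally complete
    (hTuniv : ∀ y : ℕ → X, (∀ n, 0 ≤ y n) → Monotone y →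
      (∃ b : X, ∀ n, T (y n) ≤ b) → ∃ s : X, IsLUB (Set.range y) s)
    -- a sequence in `X` and a point `x`
    (f : ℕ → X) (x : X)
    -- for every `ε > 0` the partial sums `∑_{n<N} T P_{(|f n − x| − εe)⁺} e` are
    -- order bounded in `X`
    (hsum : ∀ ε : ℝ, 0 < ε → ∃ b : X, ∀ N : ℕ,
      ∑ n ∈ Finset.range N, T (bandProjApply ((|f n - x| - ε • e) ⊔ 0) e) ≤ b) :
    -- then `(f n)` uo-converges to `x`
    ∀ u : X, 0 ≤ u → OrderConvergesTo (fun n => |f n - x| ⊓ u) (0 : X) := by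
  intro u hu
  set g : ℕ → X := fun n => |f n - x| ⊓ u with hg
  have hg0 : ∀ n, 0 ≤ g n := fun n => le_inf (abs_nonneg _) hu
  have hgu : ∀ n, g n ≤ u := fun n => inf_le_right
  have hbddg : ∀ N : ℕ, BddAbove (Set.range fun j => g (N + j)) := by
    intro N
    exact ⟨u, by rintro _ ⟨j, rfl⟩; exact hgu (N + j)⟩
  set t : ℕ → X := fun N => ⨆ j : ℕ, g (N + j) with ht
  have ht_le : ∀ N n, N ≤ n → g n ≤ t N := by
    intro N n hNn
    have h1 : g n = g (N + (n - N)) := by congr 1; omega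
    rw [h1]
    exact le_ciSup (hbddg N) (n - N)
  have ht_anti : Antitone t := by
    refine antitone_nat_of_succ_le fun N => ciSup_le fun j => ?_
    exact ht_le N ((N + 1) + j) (by omega)
  have ht0 : ∀ N, 0 ≤ t N := fun N => (hg0 N).trans (ht_le N N le_rfl)
  -- the key step: any lower bound of the `t N` is `≤ 0`
  have key : ∀ b : X, b ∈ lowerBounds (Set.range t) → b ≤ 0 := by
    intro b hb
    -- Step 1 : for every `k`, `b ≤ (k+1)⁻¹ • e ⊓ u`
    have claim1 : ∀ k : ℕ, b ≤ (((k : ℝ) + 1)⁻¹ • e) ⊓ u := by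
      intro k
      set ε : ℝ := ((k : ℝ) + 1)⁻¹ with hε_def
      have hε : 0 < ε := by positivity
      obtain ⟨bT, hbT⟩ := hsum ε hε
      set w : ℕ → X := fun n => (|f n - x| - ε • e) ⊔ 0 with hw
      have hw0 : ∀ n, 0 ≤ w n := fun n => le_sup_right
      set p : ℕ → X := fun n => bandProjApply (w n) e with hp
      have hpbdd : ∀ n, BddAbove (Set.range fun j : ℕ => e ⊓ ((j + 1) • w n)) := by
        intro n
        exact ⟨e, by rintro _ ⟨j, rfl⟩; exact inf_le_left⟩
      have hewp : ∀ n, e ⊓ w n ≤ p n := by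
        intro n
        have h1 : e ⊓ w n = e ⊓ ((0 + 1) • w n) := by rw [zero_add, one_smul]
        rw [h1]
        exact le_ciSup (hpbdd n) 0
      have hp0 : ∀ n, 0 ≤ p n := fun n => le_trans (le_inf he.le (hw0 n)) (hewp n)
      set S : ℕ → X := fun N => ∑ n ∈ Finset.range N, p n with hS
      have hS0 : ∀ N, 0 ≤ S N := by
        intro N
        induction N with
        | zero => simp [hS]
        | succ N ih =>
          have h : S (N + 1) = S N + p N := Finset.sum_range_succ p N
          rw [h]
          have := add_le_add ih (hp0 N)
          simpa using this
      have hSmono : Monotone S := by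
        refine monotone_nat_of_le_succ fun N => ?_
        have : S (N + 1) = S N + p N := Finset.sum_range_succ p N
        rw [this]
        exact le_add_of_nonneg_right (hp0 N)
      obtain ⟨s, hs⟩ := hTuniv S hS0 hSmono ⟨bT, fun N => by
        have h1 : T (S N) = ∑ n ∈ Finset.range N, T (p n) := map_sum T p (Finset.range N)
        rw [h1]; exact hbT N⟩
      have hps : ∀ N n, N ≤ n → p n ≤ s - S N := by
        intro N n hNn
        have h1 : p n + S N ≤ s := by
          calc p n + S N ≤ p n + S n := add_le_add_right (hSmono hNn) _
            _ = S (n + 1) := by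
                have hsucc : S (n + 1) = S n + p n := Finset.sum_range_succ p n
                rw [hsucc]; abel
            _ ≤ s := hs.1 ⟨n + 1, rfl⟩
        exact le_sub_iff_add_le.mpr h1
      -- Step 2 : for every `m`, `b ≤ ε•e ⊓ u + (u - (m+1)•e)⁺`
      have claim2 : ∀ m : ℕ, b ≤ (ε • e) ⊓ u + ((u - ((m : ℝ) + 1) • e) ⊔ 0) := by
        intro m
        set M : ℝ := (m : ℝ) + 1 with hM_def
        have hM : 0 < M := by positivity
        set c : X := (ε • e) ⊓ u + ((u - M • e) ⊔ 0) with hc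
        have hgle : ∀ N n, N ≤ n → g n ≤ c + M • (s - S N) := by
          intro N n hNn
          have h1 : |f n - x| ≤ w n + ε • e := sub_le_iff_le_add.mp le_sup_left
          have h3 : (w n + ε • e) ⊓ u ≤ w n ⊓ u + (ε • e) ⊓ u :=
            myInf_add_le (hw0 n) (mySmul_nonneg hε.le he.le) hu
          have h4 : w n ⊓ u = (w n ⊓ u) ⊓ (M • e) + ((w n ⊓ u - M • e) ⊔ 0) := by
            rw [myPosPart_eq]; abel
          have h5 : (w n ⊓ u) ⊓ (M • e) ≤ M • (e ⊓ w n) := by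
            have hz2 : (w n ⊓ u) ⊓ (M • e) ≤ M • w n := by
              have hww : w n ≤ M • w n := by
                have hMw : M • w n = (m : ℝ) • w n + w n := by
                  rw [hM_def, add_smul, one_smul]
                rw [hMw]
                exact le_add_of_nonneg_left (mySmul_nonneg (Nat.cast_nonneg m) (hw0 n))
              exact (inf_le_left.trans inf_le_left).trans hww
            exact (le_inf inf_le_right hz2).trans (mySmul_inf_ge hM e (w n))
          have h8 : M • (e ⊓ w n) ≤ M • (s - S N) :=
            smul_le_smul_of_nonneg_left ((hewp n).trans (hps N n hNn)) hM.le
          have h9 : (w n ⊓ u - M • e) ⊔ 0 ≤ (u - M • e) ⊔ 0 :=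
            sup_le_sup_right (sub_le_sub_right inf_le_right _) 0
          calc g n ≤ (w n + ε • e) ⊓ u := inf_le_inf_right u h1
            _ ≤ w n ⊓ u + (ε • e) ⊓ u := h3
            _ = ((w n ⊓ u) ⊓ (M • e) + ((w n ⊓ u - M • e) ⊔ 0)) + (ε • e) ⊓ u := by
                rw [← h4]
            _ ≤ (M • (s - S N) + ((u - M • e) ⊔ 0)) + (ε • e) ⊓ u :=
                add_le_add_left (add_le_add (h5.trans h8) h9) _
            _ = c + M • (s - S N) := by rw [hc]; abel
        have hTN : ∀ N, t N ≤ c + M • (s - S N) := by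
          intro N
          exact ciSup_le fun j => hgle N (N + j) (Nat.le_add_right N j)
        have hbN : ∀ N, M⁻¹ • (b - c) ≤ s - S N := by
          intro N
          have h1 : b ≤ c + M • (s - S N) := (hb ⟨N, rfl⟩).trans (hTN N)
          have h2 : b - c ≤ M • (s - S N) := sub_le_iff_le_add'.mpr h1
          have h3 := smul_le_smul_of_nonneg_left h2 (inv_nonneg.mpr hM.le)
          rwa [smul_smul, inv_mul_cancel₀ hM.ne', one_smul] at h3
        have hss : s ≤ s - M⁻¹ • (b - c) := by
          refine hs.2 ?_
          rintro _ ⟨N, rfl⟩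
          exact le_sub_comm.mp (hbN N)
        have hv0 : M⁻¹ • (b - c) ≤ 0 :=
          (add_le_iff_nonpos_right s).mp (le_sub_iff_add_le.mp hss)
        have hbc : b - c ≤ 0 := by
          have h1 := smul_le_smul_of_nonneg_left hv0 hM.le
          rwa [smul_smul, mul_inv_cancel₀ hM.ne', one_smul, smul_zero] at h1
        exact sub_nonpos.mp hbc
      -- Step 3 : weak order unit argument removes the `(u - (m+1)•e)⁺` term
      have claim3 : ∀ m : ℕ, b - (ε • e) ⊓ u ≤ u - u ⊓ ((m : ℝ) • e) := by
        intro m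
        have h1 : b - (ε • e) ⊓ u ≤ (u - ((m : ℝ) + 1) • e) ⊔ 0 :=
          sub_le_iff_le_add'.mpr (claim2 m)
        have h2 : (u - ((m : ℝ) + 1) • e) ⊔ 0 = u - u ⊓ (((m : ℝ) + 1) • e) :=
          myPosPart_eq u _
        have h3 : u ⊓ ((m : ℝ) • e) ≤ u ⊓ (((m : ℝ) + 1) • e) := by
          refine inf_le_inf_left u ?_
          have h4 : ((m : ℝ) + 1) • e = (m : ℝ) • e + e := by rw [add_smul, one_smul]
          rw [h4]
          exact le_add_of_nonneg_right he.le
        calc b - (ε • e) ⊓ u ≤ u - u ⊓ (((m : ℝ) + 1) • e) := h1.trans (le_of_eq h2)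
          _ ≤ u - u ⊓ ((m : ℝ) • e) := sub_le_sub_left h3 u
      have h5 : b - (ε • e) ⊓ u ≤ 0 := myWeakUnit he hwu hu claim3
      exact sub_nonpos.mp h5
    -- Step 4 : Archimedean argument
    have claim4 : ∀ k : ℕ, ((k : ℝ) + 1) • (b ⊔ 0) ≤ e := by
      intro k
      have hε : (0:ℝ) < ((k : ℝ) + 1)⁻¹ := by positivity
      have h1 : b ≤ ((k : ℝ) + 1)⁻¹ • e := (claim1 k).trans inf_le_left
      have h2 : b ⊔ 0 ≤ ((k : ℝ) + 1)⁻¹ • e := sup_le h1 (mySmul_nonneg hε.le he.le)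
      have h3 := smul_le_smul_of_nonneg_left h2 (by positivity : (0:ℝ) ≤ (k : ℝ) + 1)
      rwa [smul_smul, mul_inv_cancel₀ (by positivity : ((k : ℝ) + 1) ≠ 0), one_smul] at h3
    have h6 : b ⊔ 0 ≤ 0 := myArch le_sup_right claim4
    exact le_sup_left.trans h6
  -- now package everything
  refine ⟨ULift ℕ, fun b₁ b₂ => b₁.down ≤ b₂.down, fun b => t b.down, ⟨⟨0⟩⟩,
    fun b => le_rfl, fun b₁ b₂ b₃ h12 h23 => h12.trans h23,
    fun b₁ b₂ => ⟨⟨max b₁.down b₂.down⟩, le_max_left _ _, le_max_right _ _⟩,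
    fun b₁ b₂ h12 => ht_anti h12, ⟨?_, ?_⟩, fun b => ⟨b.down, fun a ha => ?_⟩⟩
  · rintro _ ⟨b, rfl⟩
    exact ht0 b.down
  · intro b hb
    refine key b ?_
    rintro _ ⟨N, rfl⟩
    exact hb ⟨⟨N⟩, rfl⟩
  · rw [sub_zero, abs_of_nonneg (hg0 a)]
    exact ht_le b.down a ha
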